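/- arXiv:1611.05352 — 2 statements merged into one kernel-verified Lean document; each statement's English description precedes it below -/
import Mathlib

section
/- The function X ↦ h^H (H X H^H + c I)^{-1} h, defined on Hermitian positive semidefinite matrices X, is convex: for PSD X₁, X₂ and t ∈ [0,1], g(t X₁ + (1−t) X₂) ≤ t g(X₁) + (1−t) g(X₂), where g(X) = h^H (H X H^H + c I)^{-1} h. -/
open Matrix
open scoped ComplexOrder

lemma key_ineq {n : Type*} [Fintype n] [DecidableEq n] (A : Matrix n n ℂ) (hA : A.PosDef)
    (h y : n → ℂ) :
    2 * (star h ⬝ᵥ y).re - (star y ⬝ᵥ A.mulVec y).re ≤ (star h ⬝ᵥ A⁻¹.mulVec h).re := by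
  have hinvH : A⁻¹ᴴ = A⁻¹ := hA.isHermitian.inv
  have hu : IsUnit A.det := hA.isUnit.map detMonoidHom
  have hAAinv : A * A⁻¹ = 1 := mul_nonsing_inv A hu
  have hAinvA : A⁻¹ * A = 1 := nonsing_inv_mul A hu
  set w : n → ℂ := A⁻¹.mulVec h with hw
  have hwA : ∀ v : n → ℂ, star w ⬝ᵥ A.mulVec v = star h ⬝ᵥ v := by
    intro v
    rw [hw, star_mulVec, ← dotProduct_mulVec, mulVec_mulVec, hinvH, hAinvA, one_mulVec]
  have hAw : A.mulVec w = h := by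
    rw [hw, mulVec_mulVec, hAAinv, one_mulVec]
  have hz := hA.posSemidef.dotProduct_mulVec_nonneg (y - w)
  rw [mulVec_sub, star_sub, sub_dotProduct, dotProduct_sub, dotProduct_sub, hwA, hwA, hAw] at hz
  have h1 : (star y ⬝ᵥ h).re = (star h ⬝ᵥ y).re := by
    have : star y ⬝ᵥ h = star (star h ⬝ᵥ y) := star_dotProduct y h
    rw [this, Complex.star_def, Complex.conj_re]
  have hre : 0 ≤ ((star y ⬝ᵥ A.mulVec y - star y ⬝ᵥ h) - (star h ⬝ᵥ y - star h ⬝ᵥ w)).re :=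
    (Complex.le_def.mp hz).1
  simp only [Complex.sub_re] at hre
  rw [h1] at hre
  linarith

lemma psd_real_smul {m : Type*} [Fintype m] {X : Matrix m m ℂ} (hX : X.PosSemidef)
    {t : ℝ} (ht : 0 ≤ t) : ((t : ℂ) • X).PosSemidef := by
  refine .of_dotProduct_mulVec_nonneg ?_ fun x => ?_
  · unfold Matrix.IsHermitian
    rw [conjTranspose_smul, hX.isHermitian.eq, Complex.star_def, Complex.conj_ofReal]
  · rw [smul_mulVec, dotProduct_smul]
    exact smul_nonneg (Complex.zero_le_real.mpr ht) (hX.dotProduct_mulVec_nonneg x)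

/-- Convexity of `X ↦ hᴴ (H X Hᴴ + c I)⁻¹ h` on PSD matrices. -/
theorem convexity_inverse_quadratic {n m : Type*} [Fintype n] [Fintype m] [DecidableEq n]
    (H : Matrix n m ℂ) (h : n → ℂ) (c : ℝ) (hc : 0 < c)
    (X₁ X₂ : Matrix m m ℂ) (hX₁ : X₁.PosSemidef) (hX₂ : X₂.PosSemidef)
    (t : ℝ) (ht0 : 0 ≤ t) (ht1 : t ≤ 1) :
    (star h ⬝ᵥ (H * ((t : ℂ) • X₁ + ((1 - t : ℝ) : ℂ) • X₂) * Hᴴ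
        + (c : ℂ) • (1 : Matrix n n ℂ))⁻¹.mulVec h).re
      ≤ t * (star h ⬝ᵥ (H * X₁ * Hᴴ + (c : ℂ) • (1 : Matrix n n ℂ))⁻¹.mulVec h).re
        + (1 - t) * (star h ⬝ᵥ (H * X₂ * Hᴴ + (c : ℂ) • (1 : Matrix n n ℂ))⁻¹.mulVec h).re := by
  have ht1' : (0:ℝ) ≤ 1 - t := by linarith
  have hcI : ((c : ℂ) • (1 : Matrix n n ℂ)).PosDef := by
    rw [smul_one_eq_diagonal]
    exact .diagonal fun _ => Complex.zero_lt_real.mpr hc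
  set A₁ : Matrix n n ℂ := H * X₁ * Hᴴ + (c : ℂ) • 1 with hA₁def
  set A₂ : Matrix n n ℂ := H * X₂ * Hᴴ + (c : ℂ) • 1 with hA₂def
  set At : Matrix n n ℂ :=
    H * ((t : ℂ) • X₁ + ((1 - t : ℝ) : ℂ) • X₂) * Hᴴ + (c : ℂ) • 1 with hAtdef
  have hA₁ : A₁.PosDef :=
    Matrix.PosDef.posSemidef_add (hX₁.mul_mul_conjTranspose_same H) hcI
  have hA₂ : A₂.PosDef :=
    Matrix.PosDef.posSemidef_add (hX₂.mul_mul_conjTranspose_same H) hcI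
  have hAt : At.PosDef :=
    Matrix.PosDef.posSemidef_add
      (((psd_real_smul hX₁ ht0).add (psd_real_smul hX₂ ht1')).mul_mul_conjTranspose_same H) hcI
  have hcomb : At = (t : ℂ) • A₁ + ((1 - t : ℝ) : ℂ) • A₂ := by
    have e1 : H * ((t : ℂ) • X₁ + ((1 - t : ℝ) : ℂ) • X₂) * Hᴴ
        = (t : ℂ) • (H * X₁ * Hᴴ) + ((1 - t : ℝ) : ℂ) • (H * X₂ * Hᴴ) := by
      simp [Matrix.mul_add, Matrix.add_mul, Matrix.mul_smul, Matrix.smul_mul]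
    have e2 : (t : ℂ) • ((c : ℂ) • (1 : Matrix n n ℂ))
        + ((1 - t : ℝ) : ℂ) • ((c : ℂ) • (1 : Matrix n n ℂ)) = (c : ℂ) • 1 := by
      rw [smul_smul, smul_smul, ← add_smul]
      congr 1
      push_cast; ring
    rw [hAtdef, hA₁def, hA₂def, e1, smul_add, smul_add, add_add_add_comm, e2]
  set y : n → ℂ := At⁻¹.mulVec h with hy
  have hu : IsUnit At.det := hAt.isUnit.map detMonoidHom
  have hAty : At.mulVec y = h := by rw [hy, mulVec_mulVec, mul_nonsing_inv At hu, one_mulVec]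
  -- Re(hᴴ At⁻¹ h) = 2 Re(hᴴ y) − Re(yᴴ At y)
  have hval : (star h ⬝ᵥ At⁻¹.mulVec h).re
      = 2 * (star h ⬝ᵥ y).re - (star y ⬝ᵥ At.mulVec y).re := by
    rw [hAty]
    have : star y ⬝ᵥ h = star (star h ⬝ᵥ y) := star_dotProduct y h
    rw [this, Complex.star_def, Complex.conj_re]
    ring
  have hsplit : (star y ⬝ᵥ At.mulVec y).re
      = t * (star y ⬝ᵥ A₁.mulVec y).re + (1 - t) * (star y ⬝ᵥ A₂.mulVec y).re := by
    rw [hcomb, add_mulVec, smul_mulVec, smul_mulVec, dotProduct_add,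
      dotProduct_smul, dotProduct_smul, Complex.add_re]
    simp [smul_eq_mul, Complex.mul_re]
  have hk₁ := key_ineq A₁ hA₁ h y
  have hk₂ := key_ineq A₂ hA₂ h y
  have hm₁ := mul_le_mul_of_nonneg_left hk₁ ht0
  have hm₂ := mul_le_mul_of_nonneg_left hk₂ ht1'
  rw [hval, hsplit]
  nlinarith [hm₁, hm₂]
end

section
/- The function ρ ↦ (1−ρ)·h^H((1−ρ)(M + σ_a² I) + σ_c² I)^{−1} h is monotonically non-increasing on [0,1), where M is a fixed Hermitian positive semidefinite matrix and σ_a², σ_c² > 0. -/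
open Matrix
open scoped ComplexOrder

private lemma shift_posDef {n : Type*} [Fintype n] [DecidableEq n]
    {B : Matrix n n ℂ} (hB : B.PosSemidef) {c : ℝ} (hc : 0 < c) :
    (B + (c : ℂ) • (1 : Matrix n n ℂ)).PosDef := by
  refine Matrix.PosDef.posSemidef_add hB ?_
  rw [smul_one_eq_diagonal]
  exact posDef_diagonal_iff.mpr fun i => by exact_mod_cast hc

private lemma key_mono {n : Type*} [Fintype n] [DecidableEq n]
    {B : Matrix n n ℂ} (hB : B.PosSemidef) (h : n → ℂ)
    {s1 s2 : ℝ} (hs1 : 0 < s1) (hs : s1 ≤ s2) :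
    (star h ⬝ᵥ (B + (s2 : ℂ) • 1)⁻¹.mulVec h).re ≤
      (star h ⬝ᵥ (B + (s1 : ℂ) • 1)⁻¹.mulVec h).re := by
  set A1 := B + (s1 : ℂ) • (1 : Matrix n n ℂ) with hA1
  set A2 := B + (s2 : ℂ) • (1 : Matrix n n ℂ) with hA2
  have hP1 : A1.PosDef := shift_posDef hB hs1
  have hP2 : A2.PosDef := shift_posDef hB (hs1.trans_le hs)
  have hu1 : IsUnit A1.det := hP1.isUnit.map (Matrix.detMonoidHom)
  have hu2 : IsUnit A2.det := hP2.isUnit.map (Matrix.detMonoidHom)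
  have hd : A2 = A1 + ((s2 - s1 : ℝ) : ℂ) • 1 := by
    rw [hA1, hA2]; push_cast; rw [sub_smul]; abel
  -- difference identity
  have hdiff : A1⁻¹ - A2⁻¹ = ((s2 - s1 : ℝ) : ℂ) • (A1⁻¹ * A2⁻¹) := by
    have : A1⁻¹ * (A2 - A1) * A2⁻¹ = A1⁻¹ - A2⁻¹ := by
      rw [mul_sub, sub_mul, mul_assoc, Matrix.mul_nonsing_inv _ hu2, mul_one,
        Matrix.nonsing_inv_mul _ hu1, one_mul]
    rw [← this, hd]
    simp [Matrix.mul_smul, Matrix.smul_mul, mul_assoc]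
  set x := A2⁻¹.mulVec h with hx
  have hhx : A2.mulVec x = h := by
    rw [hx, Matrix.mulVec_mulVec, Matrix.mul_nonsing_inv _ hu2, Matrix.one_mulVec]
  -- the quadratic form of the difference is nonneg
  have hquad : (0 : ℂ) ≤ star h ⬝ᵥ (A1⁻¹ * A2⁻¹).mulVec h := by
    have e1 : star h ⬝ᵥ (A1⁻¹ * A2⁻¹).mulVec h = star h ⬝ᵥ A1⁻¹.mulVec x := by
      rw [hx, Matrix.mulVec_mulVec]
    have e2 : star h ⬝ᵥ A1⁻¹.mulVec x = star x ⬝ᵥ (A2 * A1⁻¹).mulVec x := by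
      conv_lhs => rw [← hhx]
      rw [star_mulVec, hP2.isHermitian.eq, ← Matrix.mulVec_mulVec,
        ← Matrix.dotProduct_mulVec, Matrix.mulVec_mulVec]
    have e3 : A2 * A1⁻¹ = 1 + ((s2 - s1 : ℝ) : ℂ) • A1⁻¹ := by
      rw [hd, add_mul, Matrix.mul_nonsing_inv _ hu1, Matrix.smul_mul, one_mul]
    rw [e1, e2, e3]
    rw [Matrix.add_mulVec, dotProduct_add, Matrix.one_mulVec, smul_mulVec,
      dotProduct_smul]
    refine add_nonneg (dotProduct_star_self_nonneg x) ?_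
    refine smul_nonneg ?_ (hP1.inv.posSemidef.dotProduct_mulVec_nonneg x)
    exact_mod_cast sub_nonneg.mpr hs
  have key : (0:ℂ) ≤ star h ⬝ᵥ (A1⁻¹ - A2⁻¹).mulVec h := by
    rw [hdiff, smul_mulVec, dotProduct_smul, smul_eq_mul]
    exact mul_nonneg (by exact_mod_cast sub_nonneg.mpr hs) hquad
  rw [Matrix.sub_mulVec, dotProduct_sub] at key
  have hre := (Complex.le_def.mp key).1
  simp at hre
  linarith

private lemma eval_eq {n : Type*} [Fintype n] [DecidableEq n]
    {B : Matrix n n ℂ} (hB : B.PosSemidef) (h : n → ℂ)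
    {t sc : ℝ} (ht : 0 < t) (hsc : 0 < sc) :
    t * (star h ⬝ᵥ ((t : ℂ) • B + (sc : ℂ) • 1)⁻¹.mulVec h).re
      = (star h ⬝ᵥ (B + ((sc / t : ℝ) : ℂ) • 1)⁻¹.mulVec h).re := by
  have hC : (B + ((sc / t : ℝ) : ℂ) • (1 : Matrix n n ℂ)).PosDef :=
    shift_posDef hB (div_pos hsc ht)
  have eq1 : (t : ℂ) • B + (sc : ℂ) • (1 : Matrix n n ℂ)
      = (t : ℂ) • (B + ((sc / t : ℝ) : ℂ) • 1) := by
    rw [smul_add, smul_smul]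
    norm_cast
    rw [mul_div_cancel₀ _ ht.ne']
  haveI : Invertible (t : ℂ) :=
    invertibleOfNonzero (by exact_mod_cast ht.ne')
  rw [eq1, Matrix.inv_smul _ (t : ℂ) (hC.isUnit.map Matrix.detMonoidHom), invOf_eq_inv,
    smul_mulVec, dotProduct_smul, smul_eq_mul, ← Complex.ofReal_inv,
    Complex.re_ofReal_mul]
  rw [← mul_assoc, mul_inv_cancel₀ ht.ne', one_mul]

/-- `ρ ↦ (1−ρ) hᴴ ((1−ρ)(M + σₐ²I) + σ_c²I)⁻¹ h` is non-increasing on `[0,1)`. -/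
theorem ps_factor_antitone {n : Type*} [Fintype n] [DecidableEq n]
    (M : Matrix n n ℂ) (hM : M.PosSemidef) (h : n → ℂ)
    (sa sc : ℝ) (hsa : 0 < sa) (hsc : 0 < sc) :
    AntitoneOn (fun ρ : ℝ =>
      (1 - ρ) * (star h ⬝ᵥ (((1 - ρ : ℝ) : ℂ) • (M + (sa : ℂ) • (1 : Matrix n n ℂ))
        + (sc : ℂ) • (1 : Matrix n n ℂ))⁻¹.mulVec h).re)
      (Set.Ico (0 : ℝ) 1) := by
  intro r1 hr1 r2 hr2 hle
  simp only
  have ht1 : 0 < 1 - r1 := by simp [Set.mem_Ico] at hr1; linarith [hr1.2]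
  have ht2 : 0 < 1 - r2 := by simp [Set.mem_Ico] at hr2; linarith [hr2.2]
  have hB : (M + (sa : ℂ) • (1 : Matrix n n ℂ)).PosSemidef :=
    (shift_posDef hM hsa).posSemidef
  rw [eval_eq hB h ht1 hsc, eval_eq hB h ht2 hsc]
  refine key_mono hB h (div_pos hsc ht1) ?_
  exact div_le_div_of_nonneg_left hsc.le ht2 (by linarith)
end
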